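/- Let H be a real Hilbert space, λ ∈ ℝ, and let f : H → (-∞,∞] be proper, λ-convex and lower semicontinuous, with all sublevel sets {x : f(x) ≤ t} (t ∈ ℝ) compact in H. Let δ > 0 and x_0, x_δ ∈ H with Γ_δ(x_0, x_δ) < ∞. Then the infimum defining Γ_δ(x_0, x_δ) is attained: there exists an absolutely continuous curve γ : [0,δ] → H with γ(0) = x_0, γ(δ) = x_δ and I_f^δ(γ) = Γ_δ(x_0, x_δ). -/

import Mathlib

open Filter Topology MeasureTheory Set
open scoped ENNReal RealInnerProductSpace

noncomputable section

attribute [local instance] Classical.propDecidable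

variable {H : Type*} [NormedAddCommGroup H] [InnerProductSpace ℝ H] [CompleteSpace H]

/-- `f : H → (-∞,∞]` is proper: not identically `⊤` (and it never takes the value `⊥`). -/
def ProperFn (f : H → EReal) : Prop :=
  (∃ x, f x ≠ ⊤) ∧ ∀ x, f x ≠ ⊥

/-- `f` is `λ`-convex: `x ↦ f x - (λ/2)‖x‖²` is convex, expressed via the perturbed
convexity inequality. -/
def LambdaConvex (lam : ℝ) (f : H → EReal) : Prop :=
  ∀ x y : H, ∀ t : ℝ, 0 ≤ t → t ≤ 1 →
    f ((1 - t) • x + t • y)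
      ≤ ((1 - t : ℝ) : EReal) * f x + ((t : ℝ) : EReal) * f y
        - ((lam / 2 * (t * (1 - t)) * ‖x - y‖ ^ 2 : ℝ) : EReal)

/-- The subdifferential of a `λ`-convex function at `x` (contained in the domain of `f`). -/
def subdiff (lam : ℝ) (f : H → EReal) (x : H) : Set H :=
  {p : H | f x ≠ ⊤ ∧
    ∀ y : H, f x + ((⟪p, y - x⟫ + lam / 2 * ‖y - x‖ ^ 2 : ℝ) : EReal) ≤ f y}

/-- `∇f(x)`: the element of minimal norm of `∂f(x)` (junk value `0` if there is none). -/
def gradMin (lam : ℝ) (f : H → EReal) (x : H) : H :=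
  if h : ∃ p ∈ subdiff lam f x, ∀ q ∈ subdiff lam f x, ‖p‖ ≤ ‖q‖ then h.choose else 0

/-- `|∇f|(x) ∈ [0,∞]`, equal to `+∞` when `∂f(x) = ∅` (in particular when `f x = ⊤`). -/
def gradNorm (lam : ℝ) (f : H → EReal) (x : H) : ℝ≥0∞ :=
  if (subdiff lam f x).Nonempty then ENNReal.ofReal ‖gradMin lam f x‖ else ⊤

/-- The resolvent `J_τ(x)`: the minimizer of `y ↦ f y + ‖y-x‖²/(2τ)` (junk `0` if none). -/
def Jres (f : H → EReal) (τ : ℝ) (x : H) : H :=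
  if h : ∃ y : H, ∀ z : H,
      f y + ((‖y - x‖ ^ 2 / (2 * τ) : ℝ) : EReal)
        ≤ f z + ((‖z - x‖ ^ 2 / (2 * τ) : ℝ) : EReal)
  then h.choose else 0

/-- The Moreau–Yosida regularization `f_τ(x) = min_y (f y + ‖y-x‖²/(2τ))`. -/
def moreau (f : H → EReal) (τ : ℝ) (x : H) : ℝ :=
  (f (Jres f τ x)).toReal + ‖Jres f τ x - x‖ ^ 2 / (2 * τ)

/-- `γ` is absolutely continuous on `[a,b]` with an integrable derivative. -/
abbrev IsACCurve (a b : ℝ) (γ : ℝ → H) : Prop :=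
  ∃ g : ℝ → H, IntegrableOn g (Icc a b) ∧ ∀ t ∈ Icc a b, γ t = γ a + ∫ s in a..t, g s

/-- The action `I_f^{[a,b]}(γ) = ∫_a^b (‖γ̇‖² + |∇f|²(γ)) dt ∈ [0,∞]`, set to `+∞` when `γ`
is not absolutely continuous. -/
def actionFn (lam : ℝ) (f : H → EReal) (a b : ℝ) (γ : ℝ → H) : ℝ≥0∞ :=
  if h : IsACCurve a b γ then
    ∫⁻ t in Ioc a b, (ENNReal.ofReal (‖h.choose t‖ ^ 2) + gradNorm lam f (γ t) ^ 2)
  else ⊤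

/-- `Θ_{f,x₀,x₁}`: the action on `[0,1]` with endpoint constraints. -/
def Theta (lam : ℝ) (f : H → EReal) (x0 x1 : H) (γ : ℝ → H) : ℝ≥0∞ :=
  if γ 0 = x0 ∧ γ 1 = x1 then actionFn lam f 0 1 γ else ⊤

/-- `Γ_δ(x₀,x_δ)`: infimum of the action over curves joining the endpoints. -/
def GammaInf (lam : ℝ) (f : H → EReal) (δ : ℝ) (x0 xδ : H) : ℝ≥0∞ :=
  ⨅ (γ : ℝ → H) (_ : γ 0 = x0 ∧ γ δ = xδ), actionFn lam f 0 δ γ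

/-- Mosco convergence of `fh` to `f`: recovery sequences for the strong topology, and the
`liminf` inequality along weakly convergent sequences. -/
def Mosco (fh : ℕ → H → EReal) (f : H → EReal) : Prop :=
  (∀ x : H, ∃ xh : ℕ → H, Tendsto xh atTop (𝓝 x) ∧
      Filter.limsup (fun h => fh h (xh h)) atTop ≤ f x) ∧
  (∀ (xh : ℕ → H) (x : H),
      (∀ p : H, Tendsto (fun h => ⟪xh h, p⟫) atTop (𝓝 ⟪x, p⟫)) →
      f x ≤ Filter.liminf (fun h => fh h (xh h)) atTop)

variable {E : Type*} [NormedAddCommGroup E] [InnerProductSpace ℝ E] [CompleteSpace E]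

/-- Bounded sequences in a real Hilbert space have weakly convergent subsequences. -/
lemma exists_weak_subseq (p : ℕ → E) (M : ℝ) (hb : ∀ n, ‖p n‖ ≤ M) :
    ∃ (φ : ℕ → ℕ) (q : E), StrictMono φ ∧
      ∀ y : E, Tendsto (fun k => ⟪p (φ k), y⟫) atTop (𝓝 ⟪q, y⟫) := by
  have hM0 : 0 ≤ M := le_trans (norm_nonneg _) (hb 0)
  set V : Submodule ℝ E := (Submodule.span ℝ (Set.range p)).topologicalClosure with hV
  have hVclosed : IsClosed (V : Set E) := Submodule.isClosed_topologicalClosure _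
  haveI : CompleteSpace V := hVclosed.completeSpace_coe
  have hpV : ∀ n, p n ∈ V := fun n =>
    Submodule.le_topologicalClosure _ (Submodule.subset_span ⟨n, rfl⟩)
  have hsep : TopologicalSpace.IsSeparable (V : Set E) := by
    have h1 : TopologicalSpace.IsSeparable (Set.range p) := (Set.countable_range p).isSeparable
    have h2 := (h1.span (R := ℝ)).closure
    simpa [hV, Submodule.topologicalClosure_coe] using h2
  obtain ⟨c, hc_count, hc_sub⟩ := hsep
  obtain ⟨v, hv⟩ := (hc_count.insert 0).exists_eq_range ⟨0, Set.mem_insert _ _⟩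
  have hdense : ∀ w : E, w ∈ V → w ∈ closure (Set.range v) := by
    intro w hw
    rw [← hv]
    exact closure_mono (Set.subset_insert _ _) (hc_sub hw)
  -- extract subsequence converging against each `v i` using product compactness
  set S : Set (ℕ → ℝ) := Set.pi Set.univ (fun i => Set.Icc (-(M * ‖v i‖)) (M * ‖v i‖)) with hS
  have hScpt : IsCompact S := isCompact_univ_pi fun i => isCompact_Icc
  have hmem : ∀ n, (fun i => ⟪p n, v i⟫) ∈ S := by
    intro n i _
    have h1 := abs_real_inner_le_norm (p n) (v i)
    have h2 : ‖p n‖ * ‖v i‖ ≤ M * ‖v i‖ :=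
      mul_le_mul_of_nonneg_right (hb n) (norm_nonneg _)
    have := abs_le.mp (h1.trans h2)
    exact ⟨this.1, this.2⟩
  obtain ⟨gfun, -, φ, hφ, hconv⟩ := hScpt.tendsto_subseq hmem
  have hptconv : ∀ i, Tendsto (fun k => ⟪p (φ k), v i⟫) atTop (𝓝 (gfun i)) := by
    intro i
    rw [tendsto_pi_nhds] at hconv
    exact hconv i
  -- each ⟪p (φ k), w⟫ is Cauchy for w ∈ V
  have hCauchy : ∀ w ∈ V, CauchySeq (fun k => ⟪p (φ k), w⟫) := by
    intro w hw
    rw [Metric.cauchySeq_iff]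
    intro ε hε
    obtain ⟨i, hi⟩ : ∃ i, ‖w - v i‖ < ε / (4 * (M + 1)) := by
      have h3 := hdense w hw
      rw [Metric.mem_closure_iff] at h3
      obtain ⟨z, hz, hzd⟩ := h3 (ε / (4 * (M + 1))) (by positivity)
      obtain ⟨i, rfl⟩ := hz
      exact ⟨i, by rwa [dist_eq_norm] at hzd⟩
    obtain ⟨N, hN⟩ := Metric.cauchySeq_iff.mp (hptconv i).cauchySeq (ε / 2) (by positivity)
    refine ⟨N, fun m hm n hn => ?_⟩
    have h4 := hN m hm n hn
    have key : ∀ k l : ℕ, dist (⟪p (φ k), w⟫ : ℝ) ⟪p (φ l), w⟫ ≤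
        dist (⟪p (φ k), v i⟫ : ℝ) ⟪p (φ l), v i⟫ + 2 * M * ‖w - v i‖ := by
      intro k l
      have e1 : (⟪p (φ k), w⟫ : ℝ) - ⟪p (φ l), w⟫ =
          (⟪p (φ k), v i⟫ - ⟪p (φ l), v i⟫) + (⟪p (φ k), w - v i⟫ - ⟪p (φ l), w - v i⟫) := by
        simp [inner_sub_right]; ring
      rw [Real.dist_eq, Real.dist_eq, e1]
      have h5 : |(⟪p (φ k), w - v i⟫ : ℝ)| ≤ M * ‖w - v i‖ :=
        (abs_real_inner_le_norm _ _).trans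
          (mul_le_mul_of_nonneg_right (hb _) (norm_nonneg _))
      have h6 : |(⟪p (φ l), w - v i⟫ : ℝ)| ≤ M * ‖w - v i‖ :=
        (abs_real_inner_le_norm _ _).trans
          (mul_le_mul_of_nonneg_right (hb _) (norm_nonneg _))
      calc |(⟪p (φ k), v i⟫ - ⟪p (φ l), v i⟫) +
            (⟪p (φ k), w - v i⟫ - ⟪p (φ l), w - v i⟫)|
          ≤ |(⟪p (φ k), v i⟫ : ℝ) - ⟪p (φ l), v i⟫| +
            |(⟪p (φ k), w - v i⟫ : ℝ) - ⟪p (φ l), w - v i⟫| := abs_add_le _ _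
        _ ≤ |(⟪p (φ k), v i⟫ : ℝ) - ⟪p (φ l), v i⟫| + 2 * M * ‖w - v i‖ := by
            have := (abs_sub _ _).trans (add_le_add h5 h6)
            linarith [abs_sub_abs_le_abs_sub (⟪p (φ k), w - v i⟫ : ℝ) ⟪p (φ l), w - v i⟫,
              abs_sub (⟪p (φ k), w - v i⟫ : ℝ) (⟪p (φ l), w - v i⟫)]
    have h7 := key m n
    have h8 : 2 * M * ‖w - v i‖ < ε / 2 := by
      have hlt : ‖w - v i‖ < ε / (4 * (M + 1)) := hi
      have : 2 * M * ‖w - v i‖ ≤ 2 * M * (ε / (4 * (M + 1))) := by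
        apply mul_le_mul_of_nonneg_left (le_of_lt hlt) (by positivity)
      have h9 : 2 * M * (ε / (4 * (M + 1))) < ε / 2 := by
        rw [show (2:ℝ) * M * (ε / (4 * (M + 1))) = ε * (2 * M) / (4 * (M + 1)) by ring,
          div_lt_iff₀ (by positivity)]
        nlinarith
      linarith
    linarith [h4]
  -- define the limit functional
  have hlim : ∀ y : E, ∃ L : ℝ, Tendsto (fun k => ⟪p (φ k), y⟫) atTop (𝓝 L) := by
    intro y
    have hproj : ∀ n : ℕ, (⟪p n, y⟫ : ℝ) = ⟪p n, (V.orthogonalProjectionOnto y : E)⟫ := by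
      intro n
      have hmem' : y - (V.orthogonalProjectionOnto y : E) ∈ Vᗮ :=
        V.sub_starProjection_mem_orthogonal y
      have h0 : (⟪p n, y - (V.orthogonalProjectionOnto y : E)⟫ : ℝ) = 0 :=
        (Submodule.mem_orthogonal V _).mp hmem' (p n) (hpV n)
      rw [inner_sub_right] at h0
      linarith
    obtain ⟨L, hL⟩ := cauchySeq_tendsto_of_complete
      (hCauchy _ (SetLike.coe_mem (V.orthogonalProjectionOnto y)))
    exact ⟨L, by simpa only [← hproj] using hL⟩
  choose T hT using hlim
  have hTadd : ∀ y z, T (y + z) = T y + T z := by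
    intro y z
    refine tendsto_nhds_unique (hT (y + z)) ?_
    have := (hT y).add (hT z)
    simpa only [← inner_add_right] using this
  have hTsmul : ∀ (a : ℝ) (y : E), T (a • y) = a * T y := by
    intro a y
    refine tendsto_nhds_unique (hT (a • y)) ?_
    have := (hT y).const_mul a
    simpa only [← real_inner_smul_right] using this
  have hTbound : ∀ y, |T y| ≤ M * ‖y‖ := by
    intro y
    refine le_of_tendsto (hT y).abs (Eventually.of_forall fun k => ?_)
    exact (abs_real_inner_le_norm _ _).trans
      (mul_le_mul_of_nonneg_right (hb _) (norm_nonneg _))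
  let Tlin : E →ₗ[ℝ] ℝ :=
    { toFun := T, map_add' := hTadd, map_smul' := hTsmul }
  let Tclm : E →L[ℝ] ℝ := Tlin.mkContinuous M (fun y => by
    simpa [Real.norm_eq_abs, Tlin] using hTbound y)
  refine ⟨φ, (InnerProductSpace.toDual ℝ E).symm Tclm, hφ, fun y => ?_⟩
  have hq : (⟪(InnerProductSpace.toDual ℝ E).symm Tclm, y⟫ : ℝ) = Tclm y := by
    rw [InnerProductSpace.toDual_symm_apply]
  rw [hq]
  exact hT y

lemma norm_le_of_weak {q : E} {pk : ℕ → E} {M : ℝ} (hM : 0 ≤ M) (hb : ∀ k, ‖pk k‖ ≤ M)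
    (hw : Tendsto (fun k => (⟪pk k, q⟫ : ℝ)) atTop (𝓝 ⟪q, q⟫)) : ‖q‖ ≤ M := by
  have h1 : (⟪q, q⟫ : ℝ) ≤ M * ‖q‖ :=
    le_of_tendsto hw (Eventually.of_forall fun k =>
      (real_inner_le_norm _ _).trans (mul_le_mul_of_nonneg_right (hb k) (norm_nonneg q)))
  have h2 : (⟪q, q⟫ : ℝ) = ‖q‖ ^ 2 := real_inner_self_eq_norm_sq q
  nlinarith [norm_nonneg q]

section SubdiffBasics

variable (lam : ℝ) (f : H → EReal)

lemma subdiff_convex (x : H) : Convex ℝ (subdiff lam f x) := by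
  rintro p₁ ⟨hx₁, h₁⟩ p₂ ⟨hx₂, h₂⟩ a b ha hb hab
  have hb' : b = 1 - a := by linarith
  subst hb'
  refine ⟨hx₁, fun y => ?_⟩
  have hr₁ : ∀ r₁ r₂ : ℝ, (⟪a • p₁ + (1 - a) • p₂, y - x⟫ : ℝ) + lam / 2 * ‖y - x‖ ^ 2
      = a * ((⟪p₁, y - x⟫ : ℝ) + lam / 2 * ‖y - x‖ ^ 2)
        + (1 - a) * ((⟪p₂, y - x⟫ : ℝ) + lam / 2 * ‖y - x‖ ^ 2) := by
    intro _ _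
    rw [inner_add_left, real_inner_smul_left, real_inner_smul_left]
    ring
  rw [hr₁ 0 0]
  set r₁ : ℝ := (⟪p₁, y - x⟫ : ℝ) + lam / 2 * ‖y - x‖ ^ 2 with hrr₁
  set r₂ : ℝ := (⟪p₂, y - x⟫ : ℝ) + lam / 2 * ‖y - x‖ ^ 2 with hrr₂
  have hle : a * r₁ + (1 - a) * r₂ ≤ max r₁ r₂ := by
    have h1 := mul_le_mul_of_nonneg_left (le_max_left r₁ r₂) ha
    have h2 := mul_le_mul_of_nonneg_left (le_max_right r₁ r₂) hb
    nlinarith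
  have step1 : f x + ((a * r₁ + (1 - a) * r₂ : ℝ) : EReal) ≤ f x + ((max r₁ r₂ : ℝ) : EReal) :=
    add_le_add_right (EReal.coe_le_coe_iff.mpr hle) _
  refine step1.trans ?_
  rcases max_choice r₁ r₂ with h | h <;> rw [h]
  · exact h₁ y
  · exact h₂ y

lemma subdiff_isClosed (hfb : ∀ x, f x ≠ ⊥) (x : H) : IsClosed (subdiff lam f x) := by
  by_cases hx : f x = ⊤
  · have : subdiff lam f x = ∅ := by
      ext p; simp [subdiff, hx]
    rw [this]; exact isClosed_empty
  · have hxr : ((f x).toReal : EReal) = f x := EReal.coe_toReal hx (hfb x)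
    have : subdiff lam f x =
        ⋂ y : H, (fun p : H => (f x).toReal + (⟪p, y - x⟫ + lam / 2 * ‖y - x‖ ^ 2)) ⁻¹'
          ((fun s : ℝ => (s : EReal)) ⁻¹' Iic (f y)) := by
      ext p
      simp only [subdiff, Set.mem_setOf_eq, Set.mem_iInter, Set.mem_preimage, Set.mem_Iic]
      constructor
      · rintro ⟨-, h⟩ y
        have := h y
        rwa [← hxr, ← EReal.coe_add] at this
      · intro h
        refine ⟨hx, fun y => ?_⟩
        have := h y
        rwa [← hxr, ← EReal.coe_add]
    rw [this]
    refine isClosed_iInter fun y => IsClosed.preimage ?_ (IsClosed.preimage ?_ isClosed_Iic)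
    · exact (continuous_const.add ((continuous_inner.comp
        (continuous_id.prodMk continuous_const)).add continuous_const))
    · exact continuous_coe_real_ereal
  
lemma gradMin_spec (hfb : ∀ x, f x ≠ ⊥) {x : H} (hne : (subdiff lam f x).Nonempty) :
    gradMin lam f x ∈ subdiff lam f x ∧
      ∀ q ∈ subdiff lam f x, ‖gradMin lam f x‖ ≤ ‖q‖ := by
  obtain ⟨v, hvmem, hvnorm⟩ := exists_norm_eq_iInf_of_complete_convex hne
    ((subdiff_isClosed lam f hfb x).isComplete) (subdiff_convex lam f x) 0
  have hmin : ∀ q ∈ subdiff lam f x, ‖v‖ ≤ ‖q‖ := by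
    intro q hq
    have h1 : ‖(0 : H) - v‖ ≤ ‖(0 : H) - q‖ := by
      rw [hvnorm]
      exact ciInf_le ⟨0, fun z hz => by
        obtain ⟨w, rfl⟩ := hz; exact norm_nonneg _⟩ (⟨q, hq⟩ : subdiff lam f x)
    simpa using h1
  have hex : ∃ p ∈ subdiff lam f x, ∀ q ∈ subdiff lam f x, ‖p‖ ≤ ‖q‖ := ⟨v, hvmem, hmin⟩
  have : gradMin lam f x = hex.choose := by
    rw [gradMin, dif_pos hex]
  rw [this]
  exact ⟨hex.choose_spec.1, hex.choose_spec.2⟩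

/-- coercion helper: the subgradient inequality in real form. -/
lemma subdiff_real_ineq (hfb : ∀ x, f x ≠ ⊥) {x p : H} (hp : p ∈ subdiff lam f x)
    {y : H} (hy : f y ≠ ⊤) :
    (f x).toReal + (⟪p, y - x⟫ + lam / 2 * ‖y - x‖ ^ 2) ≤ (f y).toReal := by
  have h := hp.2 y
  have hxr : ((f x).toReal : EReal) = f x := EReal.coe_toReal hp.1 (hfb x)
  have hyr : ((f y).toReal : EReal) = f y := EReal.coe_toReal hy (hfb y)
  rw [← hxr, ← hyr, ← EReal.coe_add, EReal.coe_le_coe_iff] at h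
  exact h

/-- upper bound on `f x` at points with a subgradient. -/
lemma f_toReal_le_of_subdiff (hfb : ∀ x, f x ≠ ⊥) {x p : H} (hp : p ∈ subdiff lam f x)
    {y : H} (hy : f y ≠ ⊤) :
    (f x).toReal ≤ (f y).toReal + ‖p‖ * ‖y - x‖ + |lam| / 2 * ‖y - x‖ ^ 2 := by
  have h := subdiff_real_ineq lam f hfb hp hy
  have h1 : |(⟪p, y - x⟫ : ℝ)| ≤ ‖p‖ * ‖y - x‖ := abs_real_inner_le_norm _ _
  have h2 : -(|lam| / 2 * ‖y - x‖ ^ 2) ≤ lam / 2 * ‖y - x‖ ^ 2 := by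
    have := abs_nonneg lam
    have := neg_abs_le lam
    nlinarith [sq_nonneg ‖y - x‖]
  have := abs_le.mp h1
  linarith

/-- sequential upper bound from lower semicontinuity. -/
lemma lsc_le_of_seq {g : H → EReal} (hg : LowerSemicontinuous g) {u : ℕ → H} {x : H}
    (hu : Tendsto u atTop (𝓝 x)) {b : EReal} (hb : ∀ᶠ k in atTop, g (u k) ≤ b) :
    g x ≤ b := by
  by_contra hcon
  push_neg at hcon
  have hev : ∀ᶠ z in 𝓝 x, b < g z := hg x b hcon
  have := (hu.eventually hev).and hb
  obtain ⟨k, hk1, hk2⟩ := this.exists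
  exact absurd hk2 (not_le.mpr hk1)

end SubdiffBasics

section GradNormLSC

variable (lam : ℝ) (f : H → EReal)

lemma gradNorm_le_seq (hf : ProperFn f) (hlsc : LowerSemicontinuous f)
    {x : H} {u : ℕ → H} (hu : Tendsto u atTop (𝓝 x)) {c : ℝ≥0∞}
    (hc : ∀ k, gradNorm lam f (u k) ≤ c) : gradNorm lam f x ≤ c := by
  rcases eq_top_or_lt_top c with rfl | hctop
  · exact le_top
  have hfb := hf.2
  have hne : ∀ k, (subdiff lam f (u k)).Nonempty := by
    intro k
    by_contra hcon
    have h1 : gradNorm lam f (u k) = ⊤ := by rw [gradNorm, if_neg hcon]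
    have := hc k
    rw [h1, top_le_iff] at this
    exact absurd this hctop.ne
  set M : ℝ := c.toReal with hM
  have hM0 : 0 ≤ M := ENNReal.toReal_nonneg
  set pk : ℕ → H := fun k => gradMin lam f (u k) with hpk
  clear_value M
  have hspec : ∀ k, pk k ∈ subdiff lam f (u k) ∧
      ∀ q ∈ subdiff lam f (u k), ‖pk k‖ ≤ ‖q‖ := fun k => gradMin_spec lam f hfb (hne k)
  have hbk : ∀ k, ‖pk k‖ ≤ M := by
    intro k
    rw [hM]
    have h1 := hc k
    rw [gradNorm, if_pos (hne k)] at h1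
    exact (ENNReal.ofReal_le_iff_le_toReal hctop.ne).mp h1
  obtain ⟨φ, q, hφ, hweak⟩ := exists_weak_subseq pk M hbk
  obtain ⟨xs, hxs⟩ := hf.1
  obtain ⟨D, hD⟩ : ∃ D : ℝ, ∀ k, ‖xs - u k‖ ≤ D := by
    have ht : Tendsto (fun k => ‖xs - u k‖) atTop (𝓝 ‖xs - x‖) :=
      (Tendsto.norm (tendsto_const_nhds.sub hu))
    obtain ⟨D, hD⟩ := ht.bddAbove_range
    exact ⟨D, fun k => hD ⟨k, rfl⟩⟩
  have hD0 : 0 ≤ D := le_trans (norm_nonneg _) (hD 0)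
  set B : ℝ := (f xs).toReal + M * D + |lam| / 2 * D ^ 2 with hB
  have hfuB : ∀ k, f (u k) ≤ (B : EReal) := by
    intro k
    have h1 := f_toReal_le_of_subdiff lam f hfb (hspec k).1 hxs
    have h2 : (f (u k)).toReal ≤ B := by
      have hn1 : ‖pk k‖ * ‖xs - u k‖ ≤ M * D := by
        apply mul_le_mul (hbk k) (hD k) (norm_nonneg _) hM0
      have hn2 : |lam| / 2 * ‖xs - u k‖ ^ 2 ≤ |lam| / 2 * D ^ 2 := by
        have ha := hD k
        have h0 := norm_nonneg (xs - u k)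
        have hsq : ‖xs - u k‖ ^ 2 ≤ D ^ 2 := by nlinarith
        exact mul_le_mul_of_nonneg_left hsq (by positivity)
      rw [hB]; linarith
    calc f (u k) = (((f (u k)).toReal : ℝ) : EReal) :=
          (EReal.coe_toReal (hspec k).1.1 (hfb _)).symm
      _ ≤ (B : EReal) := EReal.coe_le_coe_iff.mpr h2
  have hfxB : f x ≤ (B : EReal) := lsc_le_of_seq hlsc hu (Eventually.of_forall hfuB)
  have hxtop : f x ≠ ⊤ := fun h => by
    rw [h] at hfxB; exact (EReal.coe_ne_top B) (top_le_iff.mp hfxB)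
  -- q is a subgradient at x
  have hqmem : q ∈ subdiff lam f x := by
    refine ⟨hxtop, fun y => ?_⟩
    by_cases hytop : f y = ⊤
    · rw [hytop]; exact le_top
    set r : ℝ := (⟪q, y - x⟫ : ℝ) + lam / 2 * ‖y - x‖ ^ 2 with hr
    set b : ℝ := (f y).toReal with hbdef
    clear_value r b
    have huφ : Tendsto (u ∘ φ) atTop (𝓝 x) := hu.comp hφ.tendsto_atTop
    have hrk : Tendsto (fun k => (⟪pk (φ k), y - u (φ k)⟫ : ℝ)
        + lam / 2 * ‖y - u (φ k)‖ ^ 2) atTop (𝓝 r) := by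
      have t1 : Tendsto (fun k => (⟪pk (φ k), y - x⟫ : ℝ)) atTop (𝓝 ⟪q, y - x⟫) :=
        hweak (y - x)
      have t2 : Tendsto (fun k => (⟪pk (φ k), x - u (φ k)⟫ : ℝ)) atTop (𝓝 0) := by
        refine squeeze_zero_norm (fun k => (abs_real_inner_le_norm _ _).trans
            (mul_le_mul_of_nonneg_right (hbk _) (norm_nonneg _))) ?_
        have h9 : Tendsto (fun k => ‖x - u (φ k)‖) atTop (𝓝 0) := by
          have h8 : Tendsto (fun k => x - u (φ k)) atTop (𝓝 (x - x)) :=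
            Tendsto.sub tendsto_const_nhds huφ
          rw [sub_self] at h8
          simpa using h8.norm
        simpa using h9.const_mul M
      have t3 : Tendsto (fun k => lam / 2 * ‖y - u (φ k)‖ ^ 2) atTop
          (𝓝 (lam / 2 * ‖y - x‖ ^ 2)) := by
        have h8 : Tendsto (fun k => y - u (φ k)) atTop (𝓝 (y - x)) :=
          Tendsto.sub tendsto_const_nhds huφ
        exact (h8.norm.pow 2).const_mul (lam / 2)
      have t12 : Tendsto (fun k => (⟪pk (φ k), y - u (φ k)⟫ : ℝ)) atTop (𝓝 ⟪q, y - x⟫) := by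
        have := t1.add t2
        simp only [add_zero] at this
        refine this.congr fun k => ?_
        rw [← inner_add_right]
        congr 1
        abel
      rw [hr]
      exact t12.add t3
    have hkey : ∀ ε : ℝ, 0 < ε → f x ≤ ((b - r + ε : ℝ) : EReal) := by
      intro ε hε
      have hev : ∀ᶠ k in atTop, r - ε < (⟪pk (φ k), y - u (φ k)⟫ : ℝ)
          + lam / 2 * ‖y - u (φ k)‖ ^ 2 := hrk.eventually (eventually_gt_nhds (by linarith))
      have hev2 : ∀ᶠ k in atTop, f (u (φ k)) ≤ ((b - r + ε : ℝ) : EReal) := by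
        filter_upwards [hev] with k hk
        have h1 := subdiff_real_ineq lam f hfb (hspec (φ k)).1 hytop
        have h2 : (f (u (φ k))).toReal ≤ b - r + ε := by
          rw [hbdef]; rw [hr] at hk; linarith
        calc f (u (φ k)) = (((f (u (φ k))).toReal : ℝ) : EReal) :=
              (EReal.coe_toReal (hspec (φ k)).1.1 (hfb _)).symm
          _ ≤ _ := EReal.coe_le_coe_iff.mpr h2
      exact lsc_le_of_seq hlsc huφ hev2
    have har : (f x).toReal + r ≤ b := by
      have h1 : ∀ ε : ℝ, 0 < ε → (f x).toReal ≤ b - r + ε := by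
        intro ε hε
        have := hkey ε hε
        rw [← EReal.coe_toReal hxtop (hfb x), EReal.coe_le_coe_iff] at this
        exact this
      have h2 : (f x).toReal ≤ b - r := by
        by_contra hcon
        push_neg at hcon
        have := h1 (((f x).toReal - (b - r)) / 2) (by linarith)
        linarith
      linarith
    calc f x + ((r : ℝ) : EReal) = (((f x).toReal + r : ℝ) : EReal) := by
          rw [EReal.coe_add, EReal.coe_toReal hxtop (hfb x)]
      _ ≤ ((b : ℝ) : EReal) := EReal.coe_le_coe_iff.mpr har
      _ = f y := by rw [hbdef]; exact EReal.coe_toReal hytop (hfb y)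
  have hnex : (subdiff lam f x).Nonempty := ⟨q, hqmem⟩
  have hxspec := gradMin_spec lam f hfb hnex
  have hqM : ‖q‖ ≤ M := by
    refine norm_le_of_weak hM0 (fun k => hbk (φ k)) ?_
    exact hweak q
  rw [gradNorm, if_pos hnex]
  calc ENNReal.ofReal ‖gradMin lam f x‖ ≤ ENNReal.ofReal ‖q‖ :=
        ENNReal.ofReal_le_ofReal (hxspec.2 q hqmem)
    _ ≤ ENNReal.ofReal M := ENNReal.ofReal_le_ofReal hqM
    _ ≤ c := by rw [hM, ENNReal.ofReal_toReal hctop.ne]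

lemma gradNorm_lsc (hf : ProperFn f) (hlsc : LowerSemicontinuous f) :
    LowerSemicontinuous (gradNorm lam f) := by
  intro x c hc
  by_contra hcon
  rw [Filter.not_eventually] at hcon
  have hfreq : ∃ᶠ z in 𝓝 x, gradNorm lam f z ≤ c := hcon.mono fun z hz => not_lt.mp hz
  have hseq : ∀ n : ℕ, ∃ z, dist z x < 1 / (n + 1) ∧ gradNorm lam f z ≤ c := by
    intro n
    have h1 := (Metric.nhds_basis_ball.frequently_iff).mp hfreq
      (i := 1 / (n + 1)) (by positivity)
    obtain ⟨z, hz1, hz2⟩ := h1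
    exact ⟨z, Metric.mem_ball.mp hz1, hz2⟩
  choose u hu1 hu2 using hseq
  have hut : Tendsto u atTop (𝓝 x) := by
    rw [tendsto_iff_dist_tendsto_zero]
    refine squeeze_zero (fun n => dist_nonneg) (fun n => le_of_lt (hu1 n)) ?_
    exact tendsto_one_div_add_atTop_nhds_zero_nat
  exact absurd (gradNorm_le_seq lam f hf hlsc hut hu2) (not_le.mpr hc)

/-- along strongly convergent sequences, `gradNorm` is bounded by the `liminf`. -/
lemma gradNorm_le_liminf (hf : ProperFn f) (hlsc : LowerSemicontinuous f)
    {x : H} {u : ℕ → H} (hu : Tendsto u atTop (𝓝 x)) :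
    gradNorm lam f x ≤ Filter.liminf (fun k => gradNorm lam f (u k)) atTop := by
  rw [Filter.le_liminf_iff]
  intro b hb
  exact hu.eventually (gradNorm_lsc lam f hf hlsc x b hb)

end GradNormLSC

section Estimates

/-- liminf commutes with squaring (inequality direction we need). -/
lemma liminf_sq_le (u : ℕ → ℝ≥0∞) :
    (Filter.liminf u atTop) ^ 2 ≤ Filter.liminf (fun k => (u k) ^ 2) atTop := by
  have hm : Monotone (fun x : ℝ≥0∞ => x ^ 2) := fun a b hab => pow_le_pow_left' hab 2
  exact (hm.map_liminf_of_continuousAt u ((ENNReal.continuous_pow 2).continuousAt)).le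

/-- Cauchy–Schwarz / Hölder bound for curves with square-integrable derivative. -/
lemma curve_holder {g : ℝ → H} {δ : ℝ} (hg : IntegrableOn g (Icc 0 δ))
    {C : ℝ≥0∞} (hC : C ≠ ⊤) (hk : ∫⁻ t in Ioc 0 δ, ENNReal.ofReal (‖g t‖ ^ 2) ≤ C)
    {s t : ℝ} (hs : 0 ≤ s) (hst : s ≤ t) (ht : t ≤ δ) :
    ‖∫ τ in s..t, g τ‖ ≤ Real.sqrt C.toReal * Real.sqrt (t - s) := by
  have hsub : Icc s t ⊆ Icc 0 δ := Icc_subset_Icc hs ht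
  have hgi : IntegrableOn g (Icc s t) := hg.mono_set hsub
  have hgi' : IntegrableOn g (Ioc s t) := hgi.mono_set Ioc_subset_Icc_self
  have h1 : ‖∫ τ in s..t, g τ‖ ≤ ∫ τ in s..t, ‖g τ‖ :=
    intervalIntegral.norm_integral_le_integral_norm hst
  have h2 : (∫ τ in s..t, ‖g τ‖) = ∫ τ in Ioc s t, ‖g τ‖ :=
    intervalIntegral.integral_of_le hst
  -- pass to lintegral
  have h3 : ENNReal.ofReal (∫ τ in Ioc s t, ‖g τ‖) = ∫⁻ τ in Ioc s t, (‖g τ‖₊ : ℝ≥0∞) :=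
    ofReal_integral_norm_eq_lintegral_enorm hgi'
  -- Hölder
  have hmeas : AEMeasurable (fun τ => (‖g τ‖₊ : ℝ≥0∞)) (volume.restrict (Ioc s t)) :=
    hgi'.aestronglyMeasurable.enorm
  have h4 : (∫⁻ τ in Ioc s t, (‖g τ‖₊ : ℝ≥0∞)) ≤
      (∫⁻ τ in Ioc s t, (‖g τ‖₊ : ℝ≥0∞) ^ (2 : ℝ)) ^ (1/2 : ℝ) *
      (∫⁻ τ in Ioc s t, (1 : ℝ≥0∞) ^ (2 : ℝ)) ^ (1/2 : ℝ) := by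
    have := ENNReal.lintegral_mul_le_Lp_mul_Lq (volume.restrict (Ioc s t))
      Real.HolderConjugate.two_two
      hmeas aemeasurable_const (g := fun _ => (1 : ℝ≥0∞))
    simpa using this
  have h5 : (∫⁻ τ in Ioc s t, (‖g τ‖₊ : ℝ≥0∞) ^ (2 : ℝ)) ≤ C := by
    have he : ∀ τ, (‖g τ‖₊ : ℝ≥0∞) ^ (2 : ℝ) = ENNReal.ofReal (‖g τ‖ ^ 2) := by
      intro τ
      rw [ENNReal.ofReal_pow (norm_nonneg _), ofReal_norm, enorm_eq_nnnorm]
      rw [show (2:ℝ) = ((2:ℕ):ℝ) by norm_num, ENNReal.rpow_natCast]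
    simp_rw [he]
    refine le_trans (lintegral_mono_set (Ioc_subset_Ioc hs ht)) hk
  have h6 : (∫⁻ τ in Ioc s t, (1 : ℝ≥0∞) ^ (2 : ℝ)) = ENNReal.ofReal (t - s) := by
    simp [Real.volume_Ioc]
  have h7 : ENNReal.ofReal (∫ τ in Ioc s t, ‖g τ‖) ≤
      C ^ (1/2 : ℝ) * (ENNReal.ofReal (t - s)) ^ (1/2 : ℝ) := by
    rw [h3]
    refine h4.trans ?_
    exact mul_le_mul' (ENNReal.rpow_le_rpow h5 (by norm_num)) (le_of_eq (by rw [h6]))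
  -- back to the reals
  have h8 : (∫ τ in Ioc s t, ‖g τ‖) ≤ Real.sqrt C.toReal * Real.sqrt (t - s) := by
    have hne : C ^ (1/2 : ℝ) * (ENNReal.ofReal (t - s)) ^ (1/2 : ℝ) ≠ ⊤ := by
      apply ENNReal.mul_ne_top
      · exact ENNReal.rpow_ne_top_of_nonneg (by norm_num) hC
      · exact ENNReal.rpow_ne_top_of_nonneg (by norm_num) ENNReal.ofReal_ne_top
    have h9 := ENNReal.toReal_mono hne h7
    rw [ENNReal.toReal_ofReal (integral_nonneg (fun τ => norm_nonneg _))] at h9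
    refine h9.trans ?_
    rw [ENNReal.toReal_mul, ← ENNReal.toReal_rpow, ← ENNReal.toReal_rpow,
      ENNReal.toReal_ofReal (by linarith), Real.sqrt_eq_rpow, Real.sqrt_eq_rpow]
  exact h1.trans (by rw [h2]; exact h8)

/-- existence of a point with small slope in any sufficiently large subset. -/
lemma exists_good_point {δ : ℝ} {G : ℝ → ℝ≥0∞}
    (hGm : AEMeasurable G (volume.restrict (Ioc 0 δ)))
    {C : ℝ≥0∞} (hG : ∫⁻ t in Ioc 0 δ, (G t) ^ 2 ≤ C) {R : ℝ≥0∞} (hR0 : R ≠ 0) (hRt : R ≠ ⊤)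
    {J : Set ℝ} (hJ : J ⊆ Ioc 0 δ) (hJμ : C / R ^ 2 < volume J) :
    ∃ t' ∈ J, G t' ≤ R := by
  by_contra hcon
  push_neg at hcon
  have hsub : J ⊆ {τ : ℝ | R ^ 2 ≤ G τ ^ 2} := fun τ hτ => by
    have := hcon τ hτ
    exact pow_le_pow_left' this.le 2
  have hcheb := mul_meas_ge_le_lintegral₀ (μ := volume.restrict (Ioc 0 δ))
    (hGm.pow_const 2) (R ^ 2)
  have hmono : volume J ≤ (volume.restrict (Ioc 0 δ)) {τ : ℝ | R ^ 2 ≤ G τ ^ 2} := by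
    rw [Measure.restrict_apply₀']
    · exact measure_mono (Set.subset_inter hsub hJ)
    · exact (measurableSet_Ioc).nullMeasurableSet
  have hfinal : R ^ 2 * volume J ≤ C :=
    le_trans (mul_le_mul_right hmono _) (hcheb.trans hG)
  have : volume J ≤ C / R ^ 2 := by
    rw [ENNReal.le_div_iff_mul_le (Or.inl (pow_ne_zero _ hR0))
      (Or.inl (ENNReal.pow_ne_top hRt))]
    rwa [mul_comm]
  exact absurd (lt_of_lt_of_le hJμ this) (lt_irrefl _)

/-- the compact set trapping all the minimizing curves. -/
lemma isCompact_iInter_cthickening {f : H → EReal}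
    (hcpt : ∀ t : ℝ, IsCompact {x : H | f x ≤ (t : EReal)}) (A DD c0 : ℝ) :
    IsCompact (⋂ R : ℕ, Metric.cthickening (c0 / (R + 1))
      {x : H | f x ≤ ((A + DD * (R + 1) : ℝ) : EReal)}) := by
  rw [isCompact_iff_totallyBounded_isComplete]
  constructor
  · rw [Metric.totallyBounded_iff]
    intro ε hε
    obtain ⟨R, hR⟩ : ∃ R : ℕ, c0 / (R + 1) < ε / 2 := by
      rcases le_or_gt c0 0 with hc0 | hc0
      · exact ⟨0, lt_of_le_of_lt (div_nonpos_of_nonpos_of_nonneg hc0 (by norm_num)) (by positivity)⟩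
      · obtain ⟨R, hR⟩ := exists_nat_gt (c0 / (ε / 2))
        refine ⟨R, ?_⟩
        rw [div_lt_iff₀ (by positivity)]
        have h1 : c0 / (ε / 2) < R + 1 := hR.trans (by linarith)
        calc c0 = c0 / (ε / 2) * (ε / 2) := by field_simp
          _ < (R + 1) * (ε / 2) := mul_lt_mul_of_pos_right h1 (by positivity)
          _ = ε / 2 * (R + 1) := by ring
    have hK := hcpt (A + DD * (R + 1))
    obtain ⟨F, hF, hcov⟩ := Metric.totallyBounded_iff.mp hK.totallyBounded (ε / 2) (by positivity)
    refine ⟨F, hF, fun z hz => ?_⟩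
    have hz' := Set.mem_iInter.mp hz R
    rw [Metric.mem_cthickening_iff] at hz'
    have hlt : EMetric.infEdist z {x : H | f x ≤ ((A + DD * (R + 1) : ℝ) : EReal)} <
        ENNReal.ofReal (ε / 2) := by
      refine lt_of_le_of_lt hz' ?_
      exact ENNReal.ofReal_lt_ofReal_iff (by positivity) |>.mpr hR
    obtain ⟨y, hyK, hdzy⟩ := EMetric.infEdist_lt_iff.mp hlt
    have hy2 := hcov hyK
    rw [Set.mem_iUnion₂] at hy2
    obtain ⟨w, hwF, hyw⟩ := hy2
    rw [Set.mem_iUnion₂]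
    refine ⟨w, hwF, ?_⟩
    rw [Metric.mem_ball] at hyw ⊢
    have hdzy' : dist z y < ε / 2 := by
      rw [edist_dist] at hdzy
      exact (ENNReal.ofReal_lt_ofReal_iff_of_nonneg dist_nonneg).mp hdzy
    calc dist z w ≤ dist z y + dist y w := dist_triangle _ _ _
      _ < ε / 2 + ε / 2 := add_lt_add hdzy' hyw
      _ = ε := by ring
  · exact (isClosed_iInter fun R => Metric.isClosed_cthickening).isComplete

end Estimates

section DerivUnique

/-- a.e. uniqueness of the `L¹` derivative of a curve. -/
lemma deriv_ae_unique {δ : ℝ} {g₁ g₂ : ℝ → H}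
    (h₁ : IntegrableOn g₁ (Icc 0 δ)) (h₂ : IntegrableOn g₂ (Icc 0 δ))
    (heq : ∀ t ∈ Icc 0 δ, (∫ s in (0:ℝ)..t, g₁ s) = ∫ s in (0:ℝ)..t, g₂ s) :
    g₁ =ᵐ[volume.restrict (Ioc 0 δ)] g₂ := by
  set h : ℝ → H := (Icc 0 δ).indicator (fun s => g₁ s - g₂ s) with hh
  have hint : Integrable h := MeasureTheory.IntegrableOn.integrable_indicator
    (show IntegrableOn (fun s => g₁ s - g₂ s) (Icc 0 δ) volume from h₁.sub h₂)
    measurableSet_Icc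
  have hloc : LocallyIntegrable h := hint.locallyIntegrable
  have hdiff := IsUnifLocDoublingMeasure.ae_tendsto_average (volume : Measure ℝ) hloc 1
  -- the integral of h over any closed ball inside [0,δ] vanishes
  have hzero : ∀ a b : ℝ, 0 ≤ a → a ≤ b → b ≤ δ →
      (∫ y in Metric.closedBall ((a+b)/2) ((b-a)/2), h y) = 0 := by
    intro a b ha hab hb
    have hball : Metric.closedBall ((a+b)/2) ((b-a)/2) = Icc a b := by
      rw [Real.closedBall_eq_Icc]
      congr 1 <;> ring
    rw [hball]
    have hICC : Icc a b ⊆ Icc 0 δ := Icc_subset_Icc ha hb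
    have hstep : (∫ y in Icc a b, h y) = ∫ y in Icc a b, (g₁ y - g₂ y) := by
      rw [hh, setIntegral_indicator measurableSet_Icc,
        Set.inter_eq_self_of_subset_left hICC]
    rw [hstep, integral_Icc_eq_integral_Ioc, ← intervalIntegral.integral_of_le hab]
    have hii : ∀ (g : ℝ → H), IntegrableOn g (Icc 0 δ) → ∀ c ∈ Icc (0:ℝ) δ,
        IntervalIntegrable g volume 0 c := by
      intro g hg c hc
      have : IntegrableOn g (Icc 0 c) := hg.mono_set (Icc_subset_Icc le_rfl hc.2)
      exact (this.mono_set (by rw [uIcc_of_le hc.1])).intervalIntegrable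
    have haI : a ∈ Icc (0:ℝ) δ := ⟨ha, hab.trans hb⟩
    have hbI : b ∈ Icc (0:ℝ) δ := ⟨ha.trans hab, hb⟩
    have e₁ : (∫ s in a..b, g₁ s) = (∫ s in (0:ℝ)..b, g₁ s) - ∫ s in (0:ℝ)..a, g₁ s :=
      (intervalIntegral.integral_interval_sub_left (hii g₁ h₁ b hbI) (hii g₁ h₁ a haI)).symm
    have e₂ : (∫ s in a..b, g₂ s) = (∫ s in (0:ℝ)..b, g₂ s) - ∫ s in (0:ℝ)..a, g₂ s :=
      (intervalIntegral.integral_interval_sub_left (hii g₂ h₂ b hbI) (hii g₂ h₂ a haI)).symm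
    have hsub : IntervalIntegrable (fun s => g₁ s) volume a b :=
      ((h₁.mono_set hICC).mono_set (by rw [uIcc_of_le hab])).intervalIntegrable
    have hsub₂ : IntervalIntegrable (fun s => g₂ s) volume a b :=
      ((h₂.mono_set hICC).mono_set (by rw [uIcc_of_le hab])).intervalIntegrable
    rw [intervalIntegral.integral_sub hsub hsub₂, e₁, e₂, heq a haI, heq b hbI]
    abel
  -- conclude pointwise a.e. on (0,δ)
  have hae : ∀ᵐ x ∂(volume : Measure ℝ), x ∈ Ioo 0 δ → g₁ x = g₂ x := by
    filter_upwards [hdiff] with x hx hxmem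
    have hrad : Tendsto (fun j : ℕ => min (x/2) (δ - x) / (j + 1)) atTop (𝓝[>] 0) := by
      rw [tendsto_nhdsWithin_iff]
      constructor
      · have := tendsto_one_div_add_atTop_nhds_zero_nat.const_mul (min (x/2) (δ - x))
        simpa [mul_one_div, div_eq_mul_inv] using this
      · refine Eventually.of_forall fun j => ?_
        have h0 : 0 < min (x/2) (δ - x) := lt_min (by linarith [hxmem.1]) (by linarith [hxmem.2])
        exact mem_Ioi.mpr (by positivity)
    have hmem2 : ∀ᶠ j : ℕ in atTop, x ∈ Metric.closedBall x (1 * (min (x/2) (δ - x) / (j + 1))) := by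
      refine Eventually.of_forall fun j => ?_
      have h0 : 0 < min (x/2) (δ - x) := lt_min (by linarith [hxmem.1]) (by linarith [hxmem.2])
      rw [Metric.mem_closedBall, dist_self]
      positivity
    have htend := hx (fun _ : ℕ => x) (fun j : ℕ => min (x/2) (δ - x) / (j + 1)) hrad hmem2
    have havg : ∀ j : ℕ, (⨍ y in Metric.closedBall x (min (x/2) (δ - x) / (j + 1)), h y) = 0 := by
      intro j
      have h0 : 0 < min (x/2) (δ - x) := lt_min (by linarith [hxmem.1]) (by linarith [hxmem.2])
      set r : ℝ := min (x/2) (δ - x) / (j + 1) with hrdef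
      have hr0 : 0 < r := by positivity
      have hrb : r ≤ min (x/2) (δ - x) := by
        rw [hrdef, div_le_iff₀ (by positivity)]
        nlinarith [h0]
      have ha' : 0 ≤ x - r := by
        have := (min_le_left (x/2) (δ - x)).trans' hrb
        linarith [hxmem.1]
      have hb' : x + r ≤ δ := by
        have := (min_le_right (x/2) (δ - x)).trans' hrb
        linarith
      have := hzero (x - r) (x + r) ha' (by linarith) hb'
      have hcen : ((x - r) + (x + r))/2 = x := by ring
      have hrad' : ((x + r) - (x - r))/2 = r := by ring
      rw [hcen, hrad'] at this
      rw [setAverage_eq, this, smul_zero]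
    have hlim0 : Tendsto (fun j : ℕ => (⨍ y in Metric.closedBall x
        (min (x/2) (δ - x) / (j + 1)), h y)) atTop (𝓝 0) := by
      simp_rw [havg]; exact tendsto_const_nhds
    have hhx : h x = 0 := tendsto_nhds_unique htend hlim0
    rw [hh] at hhx
    have hxI : x ∈ Icc 0 δ := ⟨hxmem.1.le, hxmem.2.le⟩
    rw [Set.indicator_of_mem hxI] at hhx
    exact sub_eq_zero.mp hhx
  rw [Filter.EventuallyEq, ae_restrict_iff' measurableSet_Ioc]
  have hne : ∀ᵐ x ∂(volume : Measure ℝ), x ≠ δ := by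
    have h1 : (volume : Measure ℝ) {δ} = 0 := measure_singleton δ
    have h2 := measure_eq_zero_iff_ae_notMem.mp h1
    exact h2.mono fun x hx => by simpa using hx
  filter_upwards [hae, hne] with x hx1 hx2 hx3
  exact hx1 ⟨hx3.1, lt_of_le_of_ne hx3.2 hx2⟩

end DerivUnique

section L2Plumbing

lemma enorm_sq_eq (v : H) : ((‖v‖₊ : ℝ≥0∞)) ^ (2 : ℝ) = ENNReal.ofReal (‖v‖ ^ 2) := by
  rw [ENNReal.ofReal_pow (norm_nonneg _), ofReal_norm, enorm_eq_nnnorm]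
  rw [show (2:ℝ) = ((2:ℕ):ℝ) by norm_num, ENNReal.rpow_natCast]

lemma memL2_of_lintegral {δ : ℝ} {g : ℝ → H} (hg : IntegrableOn g (Icc 0 δ))
    {C : ℝ≥0∞} (hC : C ≠ ⊤) (hk : ∫⁻ t in Ioc 0 δ, ENNReal.ofReal (‖g t‖ ^ 2) ≤ C) :
    MemLp g 2 (volume.restrict (Ioc 0 δ)) := by
  refine ⟨(hg.mono_set Ioc_subset_Icc_self).aestronglyMeasurable, ?_⟩
  rw [eLpNorm_eq_lintegral_rpow_enorm_toReal (by norm_num) (by norm_num)]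
  have h1 : (∫⁻ t in Ioc 0 δ, (‖g t‖₊ : ℝ≥0∞) ^ ((2:ℝ≥0∞)).toReal) ≤ C := by
    simp only [ENNReal.toReal_ofNat]
    simp_rw [enorm_sq_eq]
    exact hk
  exact ENNReal.rpow_lt_top_of_nonneg (by positivity) (ne_top_of_le_ne_top hC h1)

/-- the square `L²`-norm of an `Lp`-element as a lintegral. -/
lemma Lp_sq_lintegral {μ : Measure ℝ} (G : Lp H 2 μ) :
    (∫⁻ t, ENNReal.ofReal (‖(G : ℝ → H) t‖ ^ 2) ∂μ) = ENNReal.ofReal (‖G‖ ^ 2) := by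
  have hlt := MeasureTheory.Lp.eLpNorm_lt_top G
  rw [eLpNorm_eq_lintegral_rpow_enorm_toReal (by norm_num) (by norm_num)] at hlt
  simp only [enorm_eq_nnnorm] at hlt
  set I : ℝ≥0∞ := ∫⁻ t, (‖(G : ℝ → H) t‖₊ : ℝ≥0∞) ^ ((2:ℝ≥0∞)).toReal ∂μ with hI
  have hIne : I ≠ ⊤ := by
    intro hcon
    rw [hcon] at hlt
    simp only [ENNReal.toReal_ofNat] at hlt
    rw [ENNReal.top_rpow_of_pos (by norm_num)] at hlt
    exact absurd hlt (lt_irrefl _)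
  have hnorm : ‖G‖ = (I ^ (1 / ((2:ℝ≥0∞)).toReal)).toReal := by
    simp only [MeasureTheory.Lp.norm_def, eLpNorm_eq_lintegral_rpow_enorm_toReal two_ne_zero ENNReal.ofNat_ne_top, enorm_eq_nnnorm, hI]
  have hLHS : (∫⁻ t, ENNReal.ofReal (‖(G : ℝ → H) t‖ ^ 2) ∂μ) = I := by
    rw [hI]
    simp only [ENNReal.toReal_ofNat]
    exact (lintegral_congr fun t => (enorm_sq_eq _)).symm
  rw [hLHS, hnorm]
  simp only [ENNReal.toReal_ofNat]
  rw [← ENNReal.toReal_rpow]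
  have h2 : ((I.toReal ^ ((1:ℝ)/2)) ^ 2 : ℝ) = I.toReal := by
    rw [← Real.rpow_natCast (I.toReal ^ ((1:ℝ)/2)) 2, ← Real.rpow_mul ENNReal.toReal_nonneg]
    norm_num
  rw [h2, ENNReal.ofReal_toReal hIne]

/-- weak convergence + compact containment implies strong convergence. -/
lemma tendsto_of_weak_of_compact {S : Set H} (hS : IsCompact S) {u : ℕ → H} {x : H}
    (hu : ∀ n, u n ∈ S) (hw : ∀ e : H, Tendsto (fun n => (⟪u n, e⟫ : ℝ)) atTop (𝓝 ⟪x, e⟫)) :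
    Tendsto u atTop (𝓝 x) := by
  refine Filter.tendsto_of_subseq_tendsto fun ns hns => ?_
  obtain ⟨z, hzS, ms, hms, hzlim⟩ := hS.tendsto_subseq (x := u ∘ ns) (fun n => hu _)
  refine ⟨ms, ?_⟩
  have hzx : z = x := by
    have h1 : ∀ e : H, Tendsto (fun k => (⟪u (ns (ms k)), e⟫ : ℝ)) atTop (𝓝 ⟪z, e⟫) := by
      intro e
      have hcont : Continuous fun w : H => (⟪w, e⟫ : ℝ) :=
        continuous_inner.comp (continuous_id.prodMk continuous_const)
      exact (hcont.continuousAt.tendsto.comp hzlim)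
    have h2 : ∀ e : H, Tendsto (fun k => (⟪u (ns (ms k)), e⟫ : ℝ)) atTop (𝓝 ⟪x, e⟫) := by
      intro e
      exact (hw e).comp ((hns.comp hms.tendsto_atTop))
    have h3 : ∀ e : H, (⟪z - x, e⟫ : ℝ) = 0 := by
      intro e
      have := tendsto_nhds_unique (h1 e) (h2 e)
      rw [inner_sub_left, this, sub_self]
    have := h3 (z - x)
    rwa [inner_self_eq_zero, sub_eq_zero] at this
  rw [← hzx]
  exact hzlim

/-- primitive curves are continuous on the interval. -/
lemma curve_continuousOn {g : ℝ → H} {δ : ℝ} (hg : IntegrableOn g (Icc 0 δ)) (c : H) :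
    ContinuousOn (fun t => c + ∫ s in (0:ℝ)..t, g s) (Icc 0 δ) := by
  refine (continuousOn_const.add ((intervalIntegral.continuousOn_primitive hg).congr ?_))
  intro t ht
  exact (intervalIntegral.integral_of_le ht.1)

/-- unordered Hölder estimate. -/
lemma curve_holder' {g : ℝ → H} {δ : ℝ} (hg : IntegrableOn g (Icc 0 δ))
    {C : ℝ≥0∞} (hC : C ≠ ⊤) (hk : ∫⁻ t in Ioc 0 δ, ENNReal.ofReal (‖g t‖ ^ 2) ≤ C)
    {γ : ℝ → H} (hγ : ∀ t ∈ Icc 0 δ, γ t = γ 0 + ∫ s in (0:ℝ)..t, g s)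
    {s t : ℝ} (hs : s ∈ Icc 0 δ) (ht : t ∈ Icc 0 δ) :
    dist (γ t) (γ s) ≤ Real.sqrt C.toReal * Real.sqrt |t - s| := by
  have key : ∀ a b : ℝ, a ∈ Icc 0 δ → b ∈ Icc 0 δ → a ≤ b →
      dist (γ b) (γ a) ≤ Real.sqrt C.toReal * Real.sqrt (b - a) := by
    intro a b ha hb hab
    rw [dist_eq_norm, hγ a ha, hγ b hb]
    have heq : γ 0 + (∫ s in (0:ℝ)..b, g s) - (γ 0 + ∫ s in (0:ℝ)..a, g s)
        = (∫ s in (0:ℝ)..b, g s) - ∫ s in (0:ℝ)..a, g s := by abel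
    rw [heq]
    have hii : ∀ c ∈ Icc (0:ℝ) δ, IntervalIntegrable g volume 0 c := by
      intro c hc
      exact ((hg.mono_set (Icc_subset_Icc le_rfl hc.2)).mono_set
        (by rw [uIcc_of_le hc.1])).intervalIntegrable
    rw [intervalIntegral.integral_interval_sub_left (hii b hb) (hii a ha)]
    exact curve_holder hg hC hk ha.1 hab hb.2
  rcases le_total s t with h | h
  · have := key s t hs ht h
    rwa [abs_of_nonneg (by linarith)]
  · have := key t s ht hs h
    rw [dist_comm] at this
    rwa [abs_of_nonpos (by linarith), neg_sub]

end L2Plumbing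

section Containment

variable (lam : ℝ) (f : H → EReal)

lemma curve_mem_thickening (hfb : ∀ x, f x ≠ ⊥)
    {δ : ℝ} (hδ : 0 < δ) {γ : ℝ → H} {g : ℝ → H}
    (hg : IntegrableOn g (Icc 0 δ))
    (hγ : ∀ t ∈ Icc 0 δ, γ t = γ 0 + ∫ s in (0:ℝ)..t, g s)
    {C : ℝ≥0∞} (hC : C ≠ ⊤) (hC1 : 0 < C.toReal)
    (hkin : ∫⁻ t in Ioc 0 δ, ENNReal.ofReal (‖g t‖ ^ 2) ≤ C)
    (hgrad : ∫⁻ t in Ioc 0 δ, (gradNorm lam f (γ t)) ^ 2 ≤ C)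
    (hGm : AEMeasurable (fun t => gradNorm lam f (γ t)) (volume.restrict (Ioc 0 δ)))
    {xstar : H} (hxstar : f xstar ≠ ⊤)
    {D : ℝ} (hD : ∀ τ ∈ Icc 0 δ, ‖xstar - γ τ‖ ≤ D)
    {t : ℝ} (ht : t ∈ Icc 0 δ) (R : ℕ) :
    γ t ∈ Metric.cthickening (Real.sqrt C.toReal * Real.sqrt δ / (R + 1))
      {x : H | f x ≤ ((((f xstar).toReal + |lam| / 2 * D ^ 2) +
        (Real.sqrt (2 * C.toReal / δ) * D) * (R + 1) : ℝ) : EReal)} := by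
  set CR : ℝ := C.toReal with hCR
  set ρ₀ : ℝ := Real.sqrt (2 * CR / δ) with hρ₀def
  set ρR : ℝ := ρ₀ * (R + 1) with hρR
  set ℓ : ℝ := δ / ((R : ℝ) + 1) ^ 2 with hℓ
  have hR1 : (0:ℝ) < (R:ℝ) + 1 := by positivity
  have hρ₀ : 0 < ρ₀ := Real.sqrt_pos.mpr (by positivity)
  have hρRpos : 0 < ρR := by positivity
  have hℓpos : 0 < ℓ := by positivity
  have hℓδ : ℓ ≤ δ := by
    rw [hℓ]
    exact div_le_self hδ.le (one_le_pow₀ (by linarith [show (0:ℝ) ≤ (R:ℝ) from Nat.cast_nonneg R]))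
  set u : ℝ := min t (δ - ℓ) with hu
  have hu0 : 0 ≤ u := le_min ht.1 (by linarith)
  have huδ : u + ℓ ≤ δ := by
    have := min_le_right t (δ - ℓ)
    linarith
  have hut : u ≤ t := min_le_left _ _
  have htu : t ≤ u + ℓ := by
    rw [hu]
    rcases le_total t (δ - ℓ) with h | h
    · rw [min_eq_left h]; linarith
    · rw [min_eq_right h]; linarith [ht.2]
  have hJsub : Ioc u (u + ℓ) ⊆ Ioc 0 δ := fun s hs =>
    ⟨lt_of_le_of_lt hu0 hs.1, hs.2.trans huδ⟩
  -- find a good point in the window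
  have hgp : ∃ t' ∈ Ioc u (u + ℓ), gradNorm lam f (γ t') ≤ ENNReal.ofReal ρR := by
    refine exists_good_point hGm hgrad (R := ENNReal.ofReal ρR) ?_ ENNReal.ofReal_ne_top
      hJsub ?_
    · simp [ENNReal.ofReal_eq_zero, not_le, hρRpos]
    · have hvol : volume (Ioc u (u + ℓ)) = ENNReal.ofReal ℓ := by
        rw [Real.volume_Ioc]; congr 1; ring
      rw [hvol]
      have hC' : C = ENNReal.ofReal CR := by rw [hCR, ENNReal.ofReal_toReal hC]
      rw [hC', ← ENNReal.ofReal_pow hρRpos.le, ← ENNReal.ofReal_div_of_pos (by positivity)]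
      rw [ENNReal.ofReal_lt_ofReal_iff hℓpos]
      have hρsq : ρR ^ 2 = 2 * CR / δ * ((R : ℝ) + 1) ^ 2 := by
        rw [hρR, mul_pow, hρ₀def, Real.sq_sqrt (by positivity)]
      rw [hρsq, hℓ]
      rw [div_lt_div_iff₀ (by positivity) (by positivity)]
      have h2 : CR * ((R:ℝ)+1)^2 * 1 < CR * ((R:ℝ)+1)^2 * 2 := by
        nlinarith [mul_pos hC1 (pow_pos hR1 2)]
      calc CR * ((R:ℝ)+1)^2 = CR * ((R:ℝ)+1)^2 * 1 := by ring
        _ < CR * ((R:ℝ)+1)^2 * 2 := h2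
        _ = δ * (2 * CR / δ * ((R:ℝ)+1)^2) := by field_simp
  obtain ⟨t', ht'J, hgood⟩ := hgp
  have ht'I : t' ∈ Icc 0 δ := Ioc_subset_Icc_self (hJsub ht'J)
  -- subgradient bound at the good point
  have hne' : (subdiff lam f (γ t')).Nonempty := by
    by_contra hcon
    rw [gradNorm, if_neg hcon] at hgood
    exact absurd (top_le_iff.mp hgood) ENNReal.ofReal_ne_top
  have hspec := gradMin_spec lam f hfb hne'
  have hpnorm : ‖gradMin lam f (γ t')‖ ≤ ρR := by
    rw [gradNorm, if_pos hne'] at hgood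
    exact (ENNReal.ofReal_le_ofReal_iff hρRpos.le).mp hgood
  have hD0 : 0 ≤ D := le_trans (norm_nonneg _) (hD 0 ⟨le_rfl, hδ.le⟩)
  have hfbound : (f (γ t')).toReal ≤ (f xstar).toReal + ρR * D + |lam| / 2 * D ^ 2 := by
    have h1 := f_toReal_le_of_subdiff lam f hfb hspec.1 hxstar
    have h2 : ‖gradMin lam f (γ t')‖ * ‖xstar - γ t'‖ ≤ ρR * D :=
      mul_le_mul hpnorm (hD t' ht'I) (norm_nonneg _) hρRpos.le
    have h3 : |lam| / 2 * ‖xstar - γ t'‖ ^ 2 ≤ |lam| / 2 * D ^ 2 := by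
      have h4 := hD t' ht'I
      have h5 := norm_nonneg (xstar - γ t')
      have hsq : ‖xstar - γ t'‖ ^ 2 ≤ D ^ 2 := by nlinarith
      exact mul_le_mul_of_nonneg_left hsq (by positivity)
    linarith
  have hmemK : γ t' ∈ {x : H | f x ≤ ((((f xstar).toReal + |lam| / 2 * D ^ 2) +
      (Real.sqrt (2 * CR / δ) * D) * (R + 1) : ℝ) : EReal)} := by
    rw [Set.mem_setOf_eq, ← EReal.coe_toReal hspec.1.1 (hfb _)]
    rw [EReal.coe_le_coe_iff]
    rw [← hρ₀def]
    have : ρ₀ * D * ((R:ℝ) + 1) = ρR * D := by rw [hρR]; ring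
    rw [this]
    linarith
  -- distance estimate
  have hdist : dist (γ t) (γ t') ≤ Real.sqrt CR * Real.sqrt δ / ((R:ℝ) + 1) := by
    have h1 := curve_holder' hg hC hkin hγ ht'I ht
    have habs : |t - t'| ≤ ℓ := by
      have h2 := ht'J.1
      have h3 := ht'J.2
      rw [abs_le]
      constructor <;> linarith
    have h4 : Real.sqrt |t - t'| ≤ Real.sqrt ℓ := Real.sqrt_le_sqrt habs
    have h5 : Real.sqrt ℓ = Real.sqrt δ / ((R:ℝ) + 1) := by
      rw [hℓ, Real.sqrt_div hδ.le, Real.sqrt_sq (by positivity)]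
    calc dist (γ t) (γ t') ≤ Real.sqrt CR * Real.sqrt |t - t'| := h1
      _ ≤ Real.sqrt CR * Real.sqrt ℓ :=
          mul_le_mul_of_nonneg_left h4 (Real.sqrt_nonneg _)
      _ = Real.sqrt CR * Real.sqrt δ / ((R:ℝ) + 1) := by rw [h5]; ring
  rw [Metric.mem_cthickening_iff]
  refine le_trans (EMetric.infEdist_le_edist_of_mem hmemK) ?_
  rw [edist_dist]
  exact ENNReal.ofReal_le_ofReal (by exact_mod_cast hdist)

end Containment

/-- under compact sublevels, the infimum `Γ_δ` is attained when finite. -/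
theorem statement13 (lam : ℝ) (f : H → EReal)
    (hf : ProperFn f) (hconv : LambdaConvex lam f) (hlsc : LowerSemicontinuous f)
    (hcpt : ∀ t : ℝ, IsCompact {x : H | f x ≤ (t : EReal)})
    (δ : ℝ) (hδ : 0 < δ) (x0 xδ : H) (hfin : GammaInf lam f δ x0 xδ ≠ ⊤) :
    ∃ γ : ℝ → H, IsACCurve 0 δ γ ∧ γ 0 = x0 ∧ γ δ = xδ ∧
      actionFn lam f 0 δ γ = GammaInf lam f δ x0 xδ := by
  classical
  letI : MeasurableSpace H := borel H
  haveI : BorelSpace H := ⟨rfl⟩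
  have hfb := hf.2
  set μ' : Measure ℝ := volume.restrict (Ioc 0 δ) with hμ'
  haveI hfinμ : IsFiniteMeasure μ' := by
    refine ⟨?_⟩
    rw [hμ', Measure.restrict_apply_univ]
    simp [Real.volume_Ioc]
  set v : ℝ≥0∞ := GammaInf lam f δ x0 xδ with hv
  have hvtop : v ≠ ⊤ := hfin
  -- minimizing sequence
  have hmin : ∀ n : ℕ, ∃ γ : ℝ → H, (γ 0 = x0 ∧ γ δ = xδ) ∧
      actionFn lam f 0 δ γ < v + ((n : ℝ≥0∞) + 1)⁻¹ := by
    intro n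
    have hε : ((n : ℝ≥0∞) + 1)⁻¹ ≠ 0 := by simp
    have hlt : v < v + ((n : ℝ≥0∞) + 1)⁻¹ := ENNReal.lt_add_right hvtop hε
    conv_lhs at hlt => rw [hv, GammaInf]
    obtain ⟨γ, hγ⟩ := iInf_lt_iff.mp hlt
    obtain ⟨hcond, hlt2⟩ := iInf_lt_iff.mp hγ
    exact ⟨γ, hcond, hlt2⟩
  choose Γ hΓend hΓlt using hmin
  have hεtop : ∀ n : ℕ, v + ((n : ℝ≥0∞) + 1)⁻¹ ≠ ⊤ := by
    intro n
    refine ENNReal.add_ne_top.mpr ⟨hvtop, ?_⟩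
    simp [ENNReal.inv_ne_top]
  have hAC : ∀ n, IsACCurve 0 δ (Γ n) := by
    intro n
    by_contra hcon
    have h1 := hΓlt n
    rw [actionFn, dif_neg hcon] at h1
    exact absurd (h1.trans_le le_top).ne (by simp [hεtop n])
  set g : ℕ → ℝ → H := fun n => (hAC n).choose with hgdef
  have hgInt : ∀ n, IntegrableOn (g n) (Icc 0 δ) := fun n => (hAC n).choose_spec.1
  have hγeq : ∀ n, ∀ t ∈ Icc 0 δ, Γ n t = Γ n 0 + ∫ s in (0:ℝ)..t, g n s :=
    fun n => (hAC n).choose_spec.2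
  have haction : ∀ n, actionFn lam f 0 δ (Γ n) =
      ∫⁻ t in Ioc 0 δ, (ENNReal.ofReal (‖g n t‖ ^ 2) + gradNorm lam f (Γ n t) ^ 2) := by
    intro n
    rw [actionFn, dif_pos (hAC n)]
  set C : ℝ≥0∞ := v + 1 with hC
  have hCtop : C ≠ ⊤ := by
    rw [hC]; exact ENNReal.add_ne_top.mpr ⟨hvtop, ENNReal.one_ne_top⟩
  have hCRpos : 0 < C.toReal := by
    rw [hC, ENNReal.toReal_add hvtop ENNReal.one_ne_top]
    have := ENNReal.toReal_nonneg (a := v)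
    simp only [ENNReal.toReal_one]
    linarith
  have hle : ∀ n, actionFn lam f 0 δ (Γ n) ≤ C := by
    intro n
    refine (hΓlt n).le.trans ?_
    rw [hC]
    refine add_le_add_right ?_ v
    refine ENNReal.inv_le_one.mpr ?_
    exact le_add_self
  set kin : ℕ → ℝ≥0∞ := fun n => ∫⁻ t in Ioc 0 δ, ENNReal.ofReal (‖g n t‖ ^ 2) with hkindef
  set grd : ℕ → ℝ≥0∞ := fun n => ∫⁻ t in Ioc 0 δ, gradNorm lam f (Γ n t) ^ 2 with hgrddef
  have hkinle : ∀ n, kin n ≤ C := by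
    intro n
    refine le_trans ?_ (hle n)
    rw [haction n, hkindef]
    exact lintegral_mono fun t => le_add_of_nonneg_right zero_le
  have hgrdle : ∀ n, grd n ≤ C := by
    intro n
    refine le_trans ?_ (hle n)
    rw [haction n, hgrddef]
    exact lintegral_mono fun t => le_add_of_nonneg_left zero_le
  -- measurability
  have hγcont : ∀ n, ContinuousOn (Γ n) (Icc 0 δ) := by
    intro n
    exact (curve_continuousOn (hgInt n) (Γ n 0)).congr (fun t ht => hγeq n t ht)
  have hGm : ∀ n, AEMeasurable (fun t => gradNorm lam f (Γ n t)) μ' := by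
    intro n
    have h1 : AEMeasurable (Γ n) (volume.restrict (Icc 0 δ)) :=
      (hγcont n).aemeasurable measurableSet_Icc
    have h2 : AEMeasurable (Γ n) μ' :=
      h1.mono_measure (Measure.restrict_mono Ioc_subset_Icc_self le_rfl)
    exact ((gradNorm_lsc lam f hf hlsc).measurable).comp_aemeasurable h2
  have hgm : ∀ n, AEMeasurable (fun t => ENNReal.ofReal (‖g n t‖ ^ 2)) μ' := by
    intro n
    have h1 : AEStronglyMeasurable (g n) μ' :=
      ((hgInt n).mono_set Ioc_subset_Icc_self).aestronglyMeasurable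
    exact ENNReal.measurable_ofReal.comp_aemeasurable
      ((h1.norm.aemeasurable).pow_const 2)
  have hsplit : ∀ n, actionFn lam f 0 δ (Γ n) = kin n + grd n := by
    intro n
    rw [haction n, hkindef, hgrddef]
    exact lintegral_add_left' (hgm n) _
  -- action converges to the infimum
  have hvle : ∀ γ' : ℝ → H, γ' 0 = x0 ∧ γ' δ = xδ → v ≤ actionFn lam f 0 δ γ' := by
    intro γ' hcond
    rw [hv, GammaInf]
    exact le_trans (iInf_le _ γ') (iInf_le _ hcond)
  have hactv : Tendsto (fun n => actionFn lam f 0 δ (Γ n)) atTop (𝓝 v) := by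
    have h0 : Tendsto (fun n : ℕ => ((n : ℝ≥0∞) + 1)⁻¹) atTop (𝓝 0) := by
      have h1 := ENNReal.tendsto_inv_nat_nhds_zero.comp (tendsto_add_atTop_nat 1)
      refine h1.congr fun n => ?_
      simp [Function.comp]
    have hupper : Tendsto (fun n : ℕ => v + ((n : ℝ≥0∞) + 1)⁻¹) atTop (𝓝 v) := by
      have := tendsto_const_nhds (x := v) (f := atTop (α := ℕ)) |>.add h0
      simpa using this
    exact tendsto_of_tendsto_of_tendsto_of_le_of_le tendsto_const_nhds hupper
      (fun n => hvle (Γ n) (hΓend n)) (fun n => (hΓlt n).le)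
  -- extract subsequences making both energy pieces converge
  obtain ⟨κ, -, φ₁, hφ₁, hκ⟩ :=
    (isCompact_univ : IsCompact (Set.univ : Set ℝ≥0∞)).tendsto_subseq
      (x := kin) (fun n => Set.mem_univ _)
  obtain ⟨ζ, -, φ₂, hφ₂, hζ⟩ :=
    (isCompact_univ : IsCompact (Set.univ : Set ℝ≥0∞)).tendsto_subseq
      (x := grd ∘ φ₁) (fun n => Set.mem_univ _)
  -- L² elements and weak compactness
  have hmemL2 : ∀ n, MemLp (g n) 2 μ' := fun n =>
    memL2_of_lintegral (hgInt n) hCtop (hkinle n)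
  set Ln : ℕ → Lp H 2 μ' := fun n => (hmemL2 n).toLp (g n) with hLn
  have hLkin : ∀ n, ENNReal.ofReal (‖Ln n‖ ^ 2) = kin n := by
    intro n
    have h1 := Lp_sq_lintegral (Ln n)
    have h2 : (Ln n : ℝ → H) =ᵐ[μ'] g n := (hmemL2 n).coeFn_toLp
    rw [← h1, hkindef]
    refine lintegral_congr_ae ?_
    filter_upwards [h2] with t ht
    rw [ht]
  have hLbd : ∀ n, ‖Ln n‖ ≤ Real.sqrt C.toReal := by
    intro n
    have h1 : ENNReal.ofReal (‖Ln n‖ ^ 2) ≤ C := (hLkin n).le.trans (hkinle n)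
    have h2 : ‖Ln n‖ ^ 2 ≤ C.toReal := (ENNReal.ofReal_le_iff_le_toReal hCtop).mp h1
    calc ‖Ln n‖ = Real.sqrt (‖Ln n‖ ^ 2) := (Real.sqrt_sq (norm_nonneg _)).symm
      _ ≤ Real.sqrt C.toReal := Real.sqrt_le_sqrt h2
  obtain ⟨φ₃, GInf, hφ₃, hweak⟩ := exists_weak_subseq (E := Lp H 2 μ')
    (fun k => Ln (φ₁ (φ₂ k))) (Real.sqrt C.toReal) (fun k => hLbd _)
  set σ : ℕ → ℕ := fun k => φ₁ (φ₂ (φ₃ k)) with hσdef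
  have hσ : StrictMono σ := hφ₁.comp (hφ₂.comp hφ₃)
  have hweakσ : ∀ W : Lp H 2 μ',
      Tendsto (fun k => (⟪Ln (σ k), W⟫ : ℝ)) atTop (𝓝 ⟪GInf, W⟫) := fun W => hweak W
  have hkinσ : Tendsto (fun k => kin (σ k)) atTop (𝓝 κ) :=
    hκ.comp (hφ₂.comp hφ₃).tendsto_atTop
  have hgrdσ : Tendsto (fun k => grd (σ k)) atTop (𝓝 ζ) :=
    hζ.comp hφ₃.tendsto_atTop
  have hκζ : κ + ζ = v := by
    have h1 : Tendsto (fun k => actionFn lam f 0 δ (Γ (σ k))) atTop (𝓝 (κ + ζ)) := by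
      have := hkinσ.add hgrdσ
      refine this.congr fun k => (hsplit (σ k)).symm
    exact tendsto_nhds_unique h1 (hactv.comp hσ.tendsto_atTop)
  have hκtop : κ ≠ ⊤ := by
    refine ne_top_of_le_ne_top hvtop ?_
    rw [← hκζ]; exact le_self_add
  have hζtop : ζ ≠ ⊤ := by
    refine ne_top_of_le_ne_top hvtop ?_
    rw [← hκζ]; exact le_add_self
  -- limit curve
  set gInf : ℝ → H := (GInf : ℝ → H) with hgInfdef
  have hgInfI : IntegrableOn gInf (Icc 0 δ) := by
    rw [integrableOn_Icc_iff_integrableOn_Ioc]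
    have h1 : Integrable gInf μ' := memLp_one_iff_integrable.mp
      ((MeasureTheory.Lp.memLp GInf).mono_exponent (by norm_num))
    exact h1
  set γ : ℝ → H := fun t => x0 + ∫ s in (0:ℝ)..t, gInf s with hγdef
  have hγ0 : γ 0 = x0 := by
    rw [hγdef]; simp
  have hγAC : IsACCurve 0 δ γ := by
    refine ⟨gInf, hgInfI, fun t ht => ?_⟩
    rw [hγ0, hγdef]
  -- weak pointwise convergence of the curves
  have hWcalc : ∀ (F : Lp H 2 μ') (t : ℝ), t ∈ Icc 0 δ → ∀ e : H,
      (⟪(indicatorConstLp 2 (measurableSet_Ioc (a := (0:ℝ)) (b := t))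
          (measure_ne_top μ' _) e : Lp H 2 μ'), F⟫ : ℝ)
        = ⟪e, ∫ s in Ioc 0 t, (F : ℝ → H) s⟫ := by
    intro F t ht e
    rw [MeasureTheory.L2.inner_indicatorConstLp_eq_setIntegral_inner]
    have hres : μ'.restrict (Ioc 0 t) = volume.restrict (Ioc 0 t) := by
      rw [hμ', Measure.restrict_restrict measurableSet_Ioc,
        Set.inter_eq_self_of_subset_left (Ioc_subset_Ioc le_rfl ht.2)]
    have hFint : Integrable (F : ℝ → H) (volume.restrict (Ioc 0 t)) := by
      have h1 : Integrable (F : ℝ → H) μ' := memLp_one_iff_integrable.mp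
        ((MeasureTheory.Lp.memLp F).mono_exponent (by norm_num))
      refine h1.mono_measure ?_
      rw [hμ']
      exact Measure.restrict_mono (Ioc_subset_Ioc le_rfl ht.2) le_rfl
    calc (∫ s in Ioc 0 t, (⟪e, (F : ℝ → H) s⟫ : ℝ) ∂μ')
        = ∫ s in Ioc 0 t, (⟪e, (F : ℝ → H) s⟫ : ℝ) := by rw [hres]
      _ = ⟪e, ∫ s in Ioc 0 t, (F : ℝ → H) s⟫ := integral_inner hFint e
  have hptwise : ∀ t ∈ Icc 0 δ, ∀ e : H,
      Tendsto (fun k => (⟪Γ (σ k) t, e⟫ : ℝ)) atTop (𝓝 ⟪γ t, e⟫) := by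
    intro t ht e
    set W : Lp H 2 μ' := indicatorConstLp 2 (measurableSet_Ioc (a := (0:ℝ)) (b := t))
      (measure_ne_top μ' _) e with hW
    have hconv1 := hweakσ W
    have hkey : ∀ n, (⟪Ln n, W⟫ : ℝ) = ⟪e, Γ n t - x0⟫ := by
      intro n
      rw [real_inner_comm, hW, hWcalc (Ln n) t ht e]
      congr 1
      have h2 : (Ln n : ℝ → H) =ᵐ[volume.restrict (Ioc 0 t)] g n := by
        refine ae_restrict_of_ae_restrict_of_subset (Ioc_subset_Ioc le_rfl ht.2) ?_
        exact (hmemL2 n).coeFn_toLp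
      rw [integral_congr_ae h2, ← intervalIntegral.integral_of_le ht.1]
      have h3 := hγeq n t ht
      rw [(hΓend n).1] at h3
      rw [h3]
      abel
    have hkey2 : (⟪GInf, W⟫ : ℝ) = ⟪e, γ t - x0⟫ := by
      rw [real_inner_comm, hW, hWcalc GInf t ht e]
      congr 1
      rw [← intervalIntegral.integral_of_le ht.1]
      simp only [hγdef]
      abel
    have h4 : Tendsto (fun k => (⟪e, Γ (σ k) t - x0⟫ : ℝ)) atTop
        (𝓝 (⟪e, γ t - x0⟫ : ℝ)) := by
      rw [← hkey2]
      exact hconv1.congr fun k => hkey (σ k)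
    have h6 := h4.add (tendsto_const_nhds (x := (⟪e, x0⟫ : ℝ)) (f := atTop (α := ℕ)))
    have h5 : Tendsto (fun k => (⟪e, Γ (σ k) t⟫ : ℝ)) atTop (𝓝 (⟪e, γ t⟫ : ℝ)) := by
      simpa [inner_sub_right] using h6
    have h7 : (fun k => (⟪Γ (σ k) t, e⟫ : ℝ)) = fun k => (⟪e, Γ (σ k) t⟫ : ℝ) :=
      funext fun k => real_inner_comm _ _
    have h8 : (⟪γ t, e⟫ : ℝ) = ⟪e, γ t⟫ := real_inner_comm _ _
    rw [h7, h8]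
    exact h5
  -- distance bound to the base point
  obtain ⟨xstar, hxstar⟩ := hf.1
  set D : ℝ := ‖xstar - x0‖ + Real.sqrt C.toReal * Real.sqrt δ with hDdef
  have hDb : ∀ n, ∀ τ ∈ Icc 0 δ, ‖xstar - Γ n τ‖ ≤ D := by
    intro n τ hτ
    have h1 : ‖xstar - Γ n τ‖ ≤ ‖xstar - x0‖ + ‖x0 - Γ n τ‖ := by
      calc ‖xstar - Γ n τ‖ = ‖(xstar - x0) + (x0 - Γ n τ)‖ := by abel_nf
        _ ≤ _ := norm_add_le _ _
    have h2 : ‖x0 - Γ n τ‖ = dist (Γ n τ) (Γ n 0) := by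
      rw [dist_eq_norm, (hΓend n).1, norm_sub_rev]
    have h3 := curve_holder' (hgInt n) hCtop (hkinle n) (hγeq n)
      (Set.left_mem_Icc.mpr hδ.le) hτ
    have h4 : Real.sqrt |τ - 0| ≤ Real.sqrt δ := by
      refine Real.sqrt_le_sqrt ?_
      rw [sub_zero, abs_of_nonneg hτ.1]
      exact hτ.2
    have h5 : dist (Γ n τ) (Γ n 0) ≤ Real.sqrt C.toReal * Real.sqrt δ :=
      h3.trans (mul_le_mul_of_nonneg_left h4 (Real.sqrt_nonneg _))
    rw [hDdef]
    rw [h2] at h1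
    linarith
  -- the compact trap
  set Sset : Set H := ⋂ R : ℕ, Metric.cthickening (Real.sqrt C.toReal * Real.sqrt δ / (R + 1))
    {x : H | f x ≤ ((((f xstar).toReal + |lam| / 2 * D ^ 2) +
      (Real.sqrt (2 * C.toReal / δ) * D) * (R + 1) : ℝ) : EReal)} with hSdef
  have hScpt : IsCompact Sset :=
    isCompact_iInter_cthickening hcpt ((f xstar).toReal + |lam| / 2 * D ^ 2)
      (Real.sqrt (2 * C.toReal / δ) * D) (Real.sqrt C.toReal * Real.sqrt δ)
  have hmemS : ∀ n, ∀ t ∈ Icc 0 δ, Γ n t ∈ Sset := by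
    intro n t ht
    rw [hSdef]
    refine Set.mem_iInter.mpr fun R => ?_
    exact curve_mem_thickening lam f hfb hδ (hgInt n) (hγeq n) hCtop hCRpos
      (hkinle n) (hgrdle n) (hGm n) hxstar (hDb n) ht R
  -- strong pointwise convergence
  have hstrong : ∀ t ∈ Icc 0 δ, Tendsto (fun k => Γ (σ k) t) atTop (𝓝 (γ t)) :=
    fun t ht => tendsto_of_weak_of_compact hScpt (fun k => hmemS (σ k) t ht)
      (hptwise t ht)
  -- the endpoint
  have hγδ : γ δ = xδ := by
    have h1 := hstrong δ ⟨hδ.le, le_rfl⟩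
    have h2 : Tendsto (fun k => Γ (σ k) δ) atTop (𝓝 xδ) := by
      refine tendsto_const_nhds.congr fun k => ?_
      exact ((hΓend (σ k)).2).symm
    exact tendsto_nhds_unique h1 h2
  -- the gradient part of the action is lower semicontinuous
  have hgradγ : ∫⁻ t in Ioc 0 δ, gradNorm lam f (γ t) ^ 2 ≤ ζ := by
    have hpt : ∀ t ∈ Ioc 0 δ, gradNorm lam f (γ t) ^ 2 ≤
        Filter.liminf (fun k => gradNorm lam f (Γ (σ k) t) ^ 2) atTop := by
      intro t ht
      have h1 := gradNorm_le_liminf lam f hf hlsc (hstrong t (Ioc_subset_Icc_self ht))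
      calc gradNorm lam f (γ t) ^ 2
          ≤ (Filter.liminf (fun k => gradNorm lam f (Γ (σ k) t)) atTop) ^ 2 :=
            pow_le_pow_left' h1 2
        _ ≤ _ := liminf_sq_le _
    calc ∫⁻ t in Ioc 0 δ, gradNorm lam f (γ t) ^ 2
        ≤ ∫⁻ t in Ioc 0 δ, Filter.liminf (fun k => gradNorm lam f (Γ (σ k) t) ^ 2) atTop := by
          refine lintegral_mono_ae ?_
          rw [ae_restrict_iff' measurableSet_Ioc]
          exact ae_of_all _ hpt
      _ ≤ Filter.liminf (fun k => ∫⁻ t in Ioc 0 δ, gradNorm lam f (Γ (σ k) t) ^ 2) atTop :=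
          lintegral_liminf_le' (fun k => (hGm (σ k)).pow_const 2)
      _ = ζ := hgrdσ.liminf_eq
  -- the kinetic part is weakly lower semicontinuous
  have hking : ∫⁻ t in Ioc 0 δ, ENNReal.ofReal (‖gInf t‖ ^ 2) ≤ κ := by
    have hLnormσ : Tendsto (fun k => ‖Ln (σ k)‖) atTop (𝓝 (Real.sqrt κ.toReal)) := by
      have h1 : Tendsto (fun k => (kin (σ k)).toReal) atTop (𝓝 κ.toReal) :=
        (ENNReal.tendsto_toReal hκtop).comp hkinσ
      have h2 : ∀ k, (kin (σ k)).toReal = ‖Ln (σ k)‖ ^ 2 := by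
        intro k
        rw [← hLkin (σ k), ENNReal.toReal_ofReal (sq_nonneg _)]
      have h3 : Tendsto (fun k => ‖Ln (σ k)‖ ^ 2) atTop (𝓝 κ.toReal) := by
        refine h1.congr fun k => h2 k
      have h4 := (Real.continuous_sqrt.continuousAt).tendsto.comp h3
      refine h4.congr fun k => ?_
      simp only [Function.comp]
      rw [Real.sqrt_sq (norm_nonneg _)]
    have hip : (⟪GInf, GInf⟫ : ℝ) ≤ Real.sqrt κ.toReal * ‖GInf‖ := by
      refine le_of_tendsto_of_tendsto' (hweakσ GInf) (hLnormσ.mul_const ‖GInf‖) ?_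
      intro k
      exact (real_inner_le_norm _ _).trans
        (mul_le_mul_of_nonneg_right le_rfl (norm_nonneg _))
    have hnormG : ‖GInf‖ ≤ Real.sqrt κ.toReal := by
      rw [real_inner_self_eq_norm_sq] at hip
      by_contra hcon
      push_neg at hcon
      have h0 : 0 < ‖GInf‖ := lt_of_le_of_lt (Real.sqrt_nonneg _) hcon
      have h1 : Real.sqrt κ.toReal * ‖GInf‖ < ‖GInf‖ * ‖GInf‖ :=
        mul_lt_mul_of_pos_right hcon h0
      nlinarith
    have h5 : (∫⁻ t, ENNReal.ofReal (‖gInf t‖ ^ 2) ∂μ') = ENNReal.ofReal (‖GInf‖ ^ 2) :=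
      Lp_sq_lintegral GInf
    calc (∫⁻ t in Ioc 0 δ, ENNReal.ofReal (‖gInf t‖ ^ 2)) = ENNReal.ofReal (‖GInf‖ ^ 2) := h5
      _ ≤ ENNReal.ofReal ((Real.sqrt κ.toReal) ^ 2) :=
          ENNReal.ofReal_le_ofReal (by nlinarith [norm_nonneg GInf, Real.sqrt_nonneg κ.toReal])
      _ = ENNReal.ofReal κ.toReal := by rw [Real.sq_sqrt ENNReal.toReal_nonneg]
      _ = κ := ENNReal.ofReal_toReal hκtop
  -- identify the action of the limit curve
  have hchooseq : (hγAC).choose =ᵐ[μ'] gInf := by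
    refine deriv_ae_unique (hγAC).choose_spec.1 hgInfI fun t ht => ?_
    have h1 := (hγAC).choose_spec.2 t ht
    have h2 : γ t = γ 0 + ∫ s in (0:ℝ)..t, gInf s := by
      rw [hγ0, hγdef]
    rw [h2] at h1
    exact (add_left_cancel h1).symm
  have hgInfm : AEMeasurable (fun t => ENNReal.ofReal (‖gInf t‖ ^ 2)) μ' := by
    have h1 : AEStronglyMeasurable gInf μ' :=
      (MeasureTheory.Lp.memLp GInf).aestronglyMeasurable
    exact ENNReal.measurable_ofReal.comp_aemeasurable ((h1.norm.aemeasurable).pow_const 2)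
  have hactγ : actionFn lam f 0 δ γ ≤ v := by
    have h1 : actionFn lam f 0 δ γ =
        ∫⁻ t in Ioc 0 δ, (ENNReal.ofReal (‖(hγAC).choose t‖ ^ 2) + gradNorm lam f (γ t) ^ 2) := by
      rw [actionFn, dif_pos hγAC]
    have h2 : actionFn lam f 0 δ γ =
        ∫⁻ t in Ioc 0 δ, (ENNReal.ofReal (‖gInf t‖ ^ 2) + gradNorm lam f (γ t) ^ 2) := by
      rw [h1]
      refine lintegral_congr_ae ?_
      filter_upwards [hchooseq] with t ht
      rw [ht]
    rw [h2, lintegral_add_left' hgInfm]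
    rw [← hκζ]
    exact add_le_add hking hgradγ
  have hvγ : v ≤ actionFn lam f 0 δ γ := hvle γ ⟨hγ0, hγδ⟩
  exact ⟨γ, hγAC, hγ0, hγδ, le_antisymm hactγ hvγ⟩

end
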